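/- Let u : Ω → [0,∞) be measurable on a finite-measure set Ω ⊂ ℝ^n with u ∈ L^∞(Ω) and |||u|||_{M¹(Ω)} > 0. Then ‖u‖_{L¹(Ω)} ≤ |||u|||_{M¹(Ω)} [1 + log( (‖u‖_{L^∞(Ω)} / |||u|||_{M¹(Ω)}) ℒ^n(Ω) )]. -/

import Mathlib

open MeasureTheory

/-- logarithmic interpolation of `L¹` between weak-`L¹` and `L^∞`. -/
theorem interpolation_L1_weakL1_Linfty (n : ℕ) (Ω : Set (EuclideanSpace ℝ (Fin n)))
    (hΩ : MeasurableSet Ω) (hfin : volume Ω < ⊤)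
    (u : EuclideanSpace ℝ (Fin n) → ℝ) (hu : Measurable u) (hnn : ∀ x ∈ Ω, 0 ≤ u x)
    (K : ℝ) (hK : ∀ᵐ x ∂volume, x ∈ Ω → u x ≤ K)
    (W : ℝ) (hWpos : 0 < W)
    (hW : IsLUB {y : ℝ | ∃ lam > (0 : ℝ),
      y = lam * (volume {x ∈ Ω | lam < u x}).toReal} W) :
    ∫ x in Ω, u x ≤ W * (1 + Real.log (K / W * (volume Ω).toReal)) := by
  set M := (volume Ω).toReal with hM
  set g : ℝ → ℝ := fun t => (volume {x ∈ Ω | t < u x}).toReal with hg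
  have hfin' : volume Ω ≠ ⊤ := hfin.ne
  have hsub : ∀ t : ℝ, {x ∈ Ω | t < u x} ⊆ Ω := fun t x hx => hx.1
  have hfins : ∀ t : ℝ, volume {x ∈ Ω | t < u x} ≠ ⊤ :=
    fun t => ((measure_mono (hsub t)).trans_lt hfin).ne
  have hgM : ∀ t : ℝ, g t ≤ M :=
    fun t => ENNReal.toReal_mono hfin' (measure_mono (hsub t))
  have hganti : Antitone g := by
    intro s t hst
    exact ENNReal.toReal_mono (hfins s)
      (measure_mono (fun x hx => ⟨hx.1, lt_of_le_of_lt hst hx.2⟩))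
  have hub : ∀ lam, 0 < lam → lam * g lam ≤ W := fun lam hlam => hW.1 ⟨lam, hlam, rfl⟩
  -- vanishing above K
  have hzero : ∀ lam : ℝ, K ≤ lam → volume {x ∈ Ω | lam < u x} = 0 := by
    intro lam hlam
    refine measure_mono_null (fun x hx => ?_) (MeasureTheory.ae_iff.mp hK)
    intro h
    exact absurd (h hx.1) (not_le.mpr (lt_of_le_of_lt hlam hx.2))
  have hgzero : ∀ lam : ℝ, K ≤ lam → g lam = 0 := by
    intro lam hlam; simp [hg, hzero lam hlam]
  -- positivity of M
  have hMpos : 0 < M := by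
    rcases lt_or_ge 0 M with h | h
    · exact h
    · exfalso
      have hM0 : volume Ω = 0 := by
        have := ENNReal.toReal_nonneg (a := volume Ω)
        have : M = 0 := le_antisymm h this
        rwa [hM, ENNReal.toReal_eq_zero_iff, or_iff_left hfin'] at this
      have : W ≤ 0 := by
        apply hW.2
        rintro y ⟨lam, hlam, rfl⟩
        have : volume {x ∈ Ω | lam < u x} = 0 :=
          measure_mono_null (hsub lam) hM0
        simp [this]
      exact absurd this (not_le.mpr hWpos)
  -- positivity of K
  have hKpos : 0 < K := by
    by_contra h
    push_neg at h
    have : W ≤ 0 := by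
      apply hW.2
      rintro y ⟨lam, hlam, rfl⟩
      rw [hzero lam (h.trans hlam.le)]
      simp
    exact absurd this (not_le.mpr hWpos)
  -- W ≤ K * M
  have hWKM : W ≤ K * M := by
    apply hW.2
    rintro y ⟨lam, hlam, rfl⟩
    rcases le_or_gt lam K with h | h
    · exact mul_le_mul h (hgM lam) ENNReal.toReal_nonneg hKpos.le
    · rw [hzero lam h.le]
      simpa using mul_nonneg hKpos.le hMpos.le
  set T : ℝ := W / M with hT
  have hTpos : 0 < T := div_pos hWpos hMpos
  have hTK : T ≤ K := by
    rw [hT, div_le_iff₀ hMpos]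
    exact hWKM
  -- integrability of u on Ω
  haveI : Fact (volume Ω < ⊤) := ⟨hfin⟩
  have hnn' : 0 ≤ᵐ[volume.restrict Ω] u :=
    (ae_restrict_iff' hΩ).2 (Filter.Eventually.of_forall hnn)
  have hint : Integrable u (volume.restrict Ω) := by
    refine (integrable_const K).mono' hu.aestronglyMeasurable ?_
    filter_upwards [ae_restrict_of_ae hK, ae_restrict_mem hΩ, hnn'] with x h1 h2 h3
    rw [Real.norm_eq_abs, abs_of_nonneg h3]
    exact h1 h2
  -- layer cake
  have hlayer : ∫ x in Ω, u x = ∫ t in Set.Ioi (0 : ℝ), g t := by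
    rw [hint.integral_eq_integral_meas_lt hnn']
    refine setIntegral_congr_fun measurableSet_Ioi (fun t _ => ?_)
    rw [measureReal_def, Measure.restrict_apply (measurableSet_lt measurable_const hu)]
    congr 2
    ext x
    simp [Set.mem_sep_iff, and_comm]
  rw [hlayer]
  -- split off the part above K, where g vanishes
  have hIoi : Set.Ioi (0 : ℝ) = Set.Ioc 0 K ∪ Set.Ioi K := (Set.Ioc_union_Ioi_eq_Ioi hKpos.le).symm
  have hgmeas : Measurable g := hganti.measurable
  have hint1 : IntegrableOn g (Set.Ioc (0 : ℝ) K) volume := by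
    have := (hganti.antitoneOn (Set.uIcc 0 K)).intervalIntegrable (μ := volume)
    rwa [intervalIntegrable_iff_integrableOn_Ioc_of_le hKpos.le] at this
  have hint2 : IntegrableOn g (Set.Ioi K) volume := by
    refine (integrable_zero _ _ _).congr ?_
    refine (ae_restrict_iff' measurableSet_Ioi).2 (Filter.Eventually.of_forall fun t ht => ?_)
    exact (hgzero t (le_of_lt ht)).symm
  have hsplit : ∫ t in Set.Ioi (0 : ℝ), g t = ∫ t in Set.Ioc (0 : ℝ) K, g t := by
    rw [hIoi, setIntegral_union (Set.Ioc_disjoint_Ioi le_rfl) measurableSet_Ioi hint1 hint2]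
    have : ∫ t in Set.Ioi K, g t = 0 := by
      refine setIntegral_eq_zero_of_forall_eq_zero fun t ht => hgzero t (le_of_lt ht)
    rw [this, add_zero]
  rw [hsplit, ← intervalIntegral.integral_of_le hKpos.le,
    ← intervalIntegral.integral_add_adjacent_intervals (b := T)
      ((hganti.antitoneOn _).intervalIntegrable)
      ((hganti.antitoneOn _).intervalIntegrable)]
  -- bound the two pieces
  have hb1 : ∫ t in (0:ℝ)..T, g t ≤ W := by
    have : ∫ t in (0:ℝ)..T, g t ≤ ∫ t in (0:ℝ)..T, M := by
      refine intervalIntegral.integral_mono_on hTpos.le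
        ((hganti.antitoneOn _).intervalIntegrable) intervalIntegrable_const
        (fun t _ => hgM t)
    refine this.trans ?_
    rw [intervalIntegral.integral_const, smul_eq_mul, sub_zero, hT,
      div_mul_cancel₀ _ hMpos.ne']
  have hb2 : ∫ t in T..K, g t ≤ W * Real.log (K / W * M) := by
    have hWt : ∫ t in T..K, W * (1 / t) = W * Real.log (K / T) := by
      rw [intervalIntegral.integral_const_mul, integral_one_div]
      intro h
      rcases Set.mem_uIcc.mp h with ⟨h1, _⟩ | ⟨h2, _⟩
      · exact absurd h1 (not_le.mpr hTpos)
      · exact absurd h2 (not_le.mpr hKpos)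
    have harg : K / T = K / W * M := by
      rw [hT]; field_simp
    have hmono : ∫ t in T..K, g t ≤ ∫ t in T..K, W * (1 / t) := by
      refine intervalIntegral.integral_mono_on hTK
        ((hganti.antitoneOn _).intervalIntegrable) ?_ (fun t ht => ?_)
      · refine ContinuousOn.intervalIntegrable ?_
        refine (continuousOn_const.mul (continuousOn_const.div continuousOn_id ?_))
        intro t ht
        rcases Set.mem_uIcc.mp ht with ⟨h1, _⟩ | ⟨h1, _⟩
        · exact (hTpos.trans_le h1).ne'
        · exact (hKpos.trans_le h1).ne'
      · have htpos : 0 < t := hTpos.trans_le ht.1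
        rw [mul_one_div, le_div_iff₀ htpos, mul_comm]
        exact hub t htpos
    rw [← harg, ← hWt]
    exact hmono
  calc (∫ t in (0:ℝ)..T, g t) + ∫ t in T..K, g t
      ≤ W + W * Real.log (K / W * M) := add_le_add hb1 hb2
    _ = W * (1 + Real.log (K / W * M)) := by ring
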